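/- Let q ∈ C³(0,∞) be concave with q'' nondecreasing, q''(y) → 0, y²|q''(y)| → ∞, and |q''|^{3/2}/q''' → ∞ as y → ∞. Then there exists a function η(y) ≤ y/2 such that η(y)√|q''(y)| → ∞, η(y)/y → 0, and sup_{|y−t| ≤ η(t)} |q''(y)/q''(t) − 1| → 0 as t → ∞. -/

import Mathlib

open Set Filter MeasureTheory

private lemma aux_min_tendsto_atTop {f g : ℝ → ℝ} (hf : Tendsto f atTop atTop)
    (hg : Tendsto g atTop atTop) :
    Tendsto (fun x => min (f x) (g x)) atTop atTop := by
  rw [tendsto_atTop] at hf hg ⊢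
  intro b
  filter_upwards [hf b, hg b] with x h1 h2
  exact le_min h1 h2

private lemma aux_sqrt_atTop : Tendsto Real.sqrt atTop atTop :=
  (tendsto_rpow_atTop (by norm_num : (0:ℝ) < 1/2)).congr
    fun x => (Real.sqrt_eq_rpow x).symm

set_option maxHeartbeats 1000000 in
theorem stmt18 (q q' q'' q''' : ℝ → ℝ)
    (hd1 : ∀ y ∈ Ioi (0:ℝ), HasDerivAt q (q' y) y)
    (hd2 : ∀ y ∈ Ioi (0:ℝ), HasDerivAt q' (q'' y) y)
    (hd3 : ∀ y ∈ Ioi (0:ℝ), HasDerivAt q'' (q''' y) y)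
    (hcont : ContinuousOn q''' (Ioi 0))
    (hneg : ∀ y ∈ Ioi (0:ℝ), q'' y < 0)
    (hq2mono : MonotoneOn q'' (Ioi 0))
    (hq2lim : Tendsto q'' atTop (nhds 0))
    (hq3nonneg : ∀ y ∈ Ioi (0:ℝ), 0 ≤ q''' y)
    (hy2q2 : Tendsto (fun y => y ^ 2 * |q'' y|) atTop atTop)
    (hq32 : Tendsto (fun y => |q'' y| ^ ((3:ℝ)/2) / q''' y) atTop atTop) :
    ∃ η : ℝ → ℝ,
      (∀ y ≥ (1:ℝ), η y ≤ y / 2) ∧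
      Tendsto (fun y => η y * Real.sqrt |q'' y|) atTop atTop ∧
      Tendsto (fun y => η y / y) atTop (nhds 0) ∧
      Tendsto (fun t => sSup ((fun y => |q'' y / q'' t - 1|) '' Icc (t - η t) (t + η t)))
        atTop (nhds 0) := by
  classical
  -- notation
  set M : ℝ → ℝ := fun y => |q'' y| ^ ((3:ℝ)/2) / q''' y with hMdef
  set g : ℝ → ℝ := fun y => y * Real.sqrt |q'' y| with hgdef
  set m : ℝ → ℝ := fun t => sInf (M '' Ici (t/2)) with hmdef
  set G : ℝ → ℝ := fun t => sInf (g '' Ici t) with hGdef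
  set c : ℝ → ℝ := fun t => Real.sqrt (min (m t) (G t)) with hcdef
  set η : ℝ → ℝ := fun t => min (t/2) (c t / Real.sqrt |q'' t|) with hηdef
  -- basic facts
  have hMn : ∀ y : ℝ, 0 < y → 0 ≤ M y := fun y hy =>
    div_nonneg (Real.rpow_nonneg (abs_nonneg _) _) (hq3nonneg y hy)
  have hm_le : ∀ t : ℝ, 0 < t → ∀ y, t/2 ≤ y → m t ≤ M y := by
    intro t ht y hy
    refine csInf_le ⟨0, ?_⟩ ⟨y, mem_Ici.mpr hy, rfl⟩
    rintro z ⟨w, hw, rfl⟩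
    exact hMn w (lt_of_lt_of_le (by linarith) hw)
  have hm_top : Tendsto m atTop atTop := by
    rw [tendsto_atTop]
    intro b
    obtain ⟨Y, hY⟩ := eventually_atTop.mp (tendsto_atTop.mp hq32 b)
    filter_upwards [eventually_ge_atTop (2 * max Y 1)] with t ht
    refine le_csInf ⟨M (t/2), ⟨t/2, self_mem_Ici, rfl⟩⟩ ?_
    rintro z ⟨w, hw, rfl⟩
    refine hY w ?_
    have hw' : t/2 ≤ w := hw
    have h1 : Y ≤ max Y 1 := le_max_left _ _
    linarith
  have hg_top : Tendsto g atTop atTop := by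
    have h1 : Tendsto (fun y => Real.sqrt (y ^ 2 * |q'' y|)) atTop atTop :=
      aux_sqrt_atTop.comp hy2q2
    refine Tendsto.congr' ?_ h1
    filter_upwards [eventually_ge_atTop (0:ℝ)] with y hy
    rw [Real.sqrt_mul (sq_nonneg y), Real.sqrt_sq hy]
  have hG_le : ∀ t : ℝ, 0 ≤ t → G t ≤ g t := by
    intro t ht
    refine csInf_le ⟨0, ?_⟩ ⟨t, self_mem_Ici, rfl⟩
    rintro z ⟨w, hw, rfl⟩
    exact mul_nonneg (le_trans ht (mem_Ici.mp hw)) (Real.sqrt_nonneg _)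
  have hG_top : Tendsto G atTop atTop := by
    rw [tendsto_atTop]
    intro b
    obtain ⟨Y, hY⟩ := eventually_atTop.mp (tendsto_atTop.mp hg_top b)
    filter_upwards [eventually_ge_atTop Y] with t ht
    refine le_csInf ⟨g t, ⟨t, self_mem_Ici, rfl⟩⟩ ?_
    rintro z ⟨w, hw, rfl⟩
    exact hY w (le_trans ht (mem_Ici.mp hw))
  have hc_top : Tendsto c atTop atTop :=
    aux_sqrt_atTop.comp (aux_min_tendsto_atTop hm_top hG_top)
  have hη_nonneg : ∀ t : ℝ, 0 ≤ t → 0 ≤ η t := fun t ht =>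
    le_min (by linarith) (div_nonneg (Real.sqrt_nonneg _) (Real.sqrt_nonneg _))
  refine ⟨η, fun y _ => min_le_left _ _, ?_, ?_, ?_⟩
  · -- η √|q''| → ∞
    have heq : (fun t => min (g t / 2) (c t)) =ᶠ[atTop]
        (fun t => η t * Real.sqrt |q'' t|) := by
      filter_upwards [eventually_gt_atTop (0:ℝ)] with t ht
      have hs : 0 < Real.sqrt |q'' t| :=
        Real.sqrt_pos.mpr (abs_pos.mpr (hneg t ht).ne)
      simp only [hηdef]
      rw [min_mul_of_nonneg _ _ hs.le, div_mul_cancel₀ _ hs.ne']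
      congr 1
      simp only [hgdef]
      ring
    exact Tendsto.congr' heq
      (aux_min_tendsto_atTop (hg_top.atTop_div_const two_pos) hc_top)
  · -- η / t → 0
    apply squeeze_zero_norm' (a := fun t => (Real.sqrt (G t))⁻¹)
    · filter_upwards [eventually_ge_atTop (1:ℝ), tendsto_atTop.mp hG_top 1]
        with t ht hGt
      have ht0 : (0:ℝ) < t := by linarith
      have hGpos : (0:ℝ) < G t := by linarith
      have hsG : 0 < Real.sqrt (G t) := Real.sqrt_pos.mpr hGpos
      have hgt : G t ≤ g t := hG_le t ht0.le
      have hgpos : 0 < g t := lt_of_lt_of_le hGpos hgt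
      have hcle : c t ≤ Real.sqrt (G t) := Real.sqrt_le_sqrt (min_le_right _ _)
      have h1 : η t / t ≤ c t / g t := by
        calc η t / t ≤ (c t / Real.sqrt |q'' t|) / t := by
              gcongr
              exact min_le_right _ _
          _ = c t / g t := by
              rw [div_div]
              congr 1
              simp only [hgdef]
              ring
      have h2 : c t / g t ≤ Real.sqrt (G t) / G t :=
        div_le_div₀ (Real.sqrt_nonneg _) hcle hGpos hgt
      have h3 : Real.sqrt (G t) / G t = (Real.sqrt (G t))⁻¹ := by
        have hms : Real.sqrt (G t) * Real.sqrt (G t) = G t := Real.mul_self_sqrt hGpos.le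
        field_simp
        nlinarith [hms]
      have hn : 0 ≤ η t / t := div_nonneg (hη_nonneg t ht0.le) ht0.le
      rw [Real.norm_eq_abs, abs_of_nonneg hn]
      calc η t / t ≤ c t / g t := h1
        _ ≤ Real.sqrt (G t) / G t := h2
        _ = (Real.sqrt (G t))⁻¹ := h3
    · exact tendsto_inv_atTop_zero.comp (aux_sqrt_atTop.comp hG_top)
  · -- sSup → 0
    apply squeeze_zero_norm' (a := fun t => 5 * (Real.sqrt (m t))⁻¹)
    · filter_upwards [eventually_ge_atTop (2:ℝ), tendsto_atTop.mp hm_top 1]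
        with t ht2 hmt
      have ht0 : (0:ℝ) < t := by linarith
      have htq : q'' t < 0 := hneg t ht0
      have hft : 0 < |q'' t| := abs_pos.mpr htq.ne
      have hst : 0 < Real.sqrt |q'' t| := Real.sqrt_pos.mpr hft
      have hmpos : 0 < m t := by linarith
      have hsm : 1 ≤ Real.sqrt (m t) := by
        have := Real.sqrt_le_sqrt hmt
        rwa [Real.sqrt_one] at this
      have hsmpos : 0 < Real.sqrt (m t) := by linarith
      have he0 : 0 ≤ η t := hη_nonneg t ht0.le
      have heet : η t ≤ t/2 := min_le_left _ _
      have hes : η t * Real.sqrt |q'' t| ≤ c t := by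
        have h2 : η t ≤ c t / Real.sqrt |q'' t| := min_le_right _ _
        rwa [le_div_iff₀ hst] at h2
      have hc_le : c t ≤ Real.sqrt (m t) := Real.sqrt_le_sqrt (min_le_left _ _)
      -- the interval
      have hts : t ∈ Icc (t - η t) (t + η t) := ⟨by linarith, by linarith⟩
      have hmem : ∀ x ∈ Icc (t - η t) (t + η t), t/2 ≤ x ∧ 0 < x := by
        intro x hx
        constructor
        · linarith [hx.1]
        · linarith [hx.1]
      -- derivative of (√|q''|)⁻¹ with bound
      have hD : ∀ x ∈ Icc (t - η t) (t + η t),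
          HasDerivWithinAt (fun y => (Real.sqrt |q'' y|)⁻¹)
            (q''' x / (2 * |q'' x| * Real.sqrt |q'' x|)) (Icc (t - η t) (t + η t)) x := by
        intro x hx
        have hx0 : 0 < x := (hmem x hx).2
        have hfx : 0 < -q'' x := neg_pos.mpr (hneg x hx0)
        have hsx : 0 < Real.sqrt (-q'' x) := Real.sqrt_pos.mpr hfx
        have h1 : HasDerivAt (fun y => -q'' y) (-q''' x) x := (hd3 x hx0).neg
        have h2 := h1.sqrt hfx.ne'
        have h3 := h2.inv hsx.ne'
        have hval : -(-q''' x / (2 * Real.sqrt (-q'' x))) / Real.sqrt (-q'' x) ^ 2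
            = q''' x / (2 * |q'' x| * Real.sqrt |q'' x|) := by
          rw [abs_of_neg (hneg x hx0), Real.sq_sqrt hfx.le]
          field_simp
        rw [hval] at h3
        refine h3.hasDerivWithinAt.congr ?_ ?_
        · intro y hy
          rw [abs_of_neg (hneg y (hmem y hy).2)]
          rfl
        · rw [abs_of_neg (hneg x hx0)]
          rfl
      have hDb : ∀ x ∈ Icc (t - η t) (t + η t),
          ‖q''' x / (2 * |q'' x| * Real.sqrt |q'' x|)‖ ≤ (2 * m t)⁻¹ := by
        intro x hx
        have hx0 : 0 < x := (hmem x hx).2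
        have hfx : 0 < |q'' x| := abs_pos.mpr (hneg x hx0).ne
        have hsx : 0 < Real.sqrt |q'' x| := Real.sqrt_pos.mpr hfx
        have hq3 : 0 ≤ q''' x := hq3nonneg x hx0
        have hM : m t ≤ M x := hm_le t ht0 x (hmem x hx).1
        have h32 : |q'' x| ^ ((3:ℝ)/2) = |q'' x| * Real.sqrt |q'' x| := by
          rw [show (3:ℝ)/2 = 1 + 1/2 by norm_num, Real.rpow_add hfx, Real.rpow_one,
            Real.sqrt_eq_rpow]
        have hkey : q''' x * m t ≤ |q'' x| * Real.sqrt |q'' x| := by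
          rcases eq_or_lt_of_le hq3 with h0 | hpos3
          · rw [← h0, zero_mul]
            positivity
          · have hMx : m t ≤ |q'' x| ^ ((3:ℝ)/2) / q''' x := hM
            rw [le_div_iff₀ hpos3] at hMx
            rw [h32] at hMx
            linarith [hMx]
        have hden : (0:ℝ) < 2 * |q'' x| * Real.sqrt |q'' x| :=
          mul_pos (mul_pos two_pos hfx) hsx
        have hDnn : 0 ≤ q''' x / (2 * |q'' x| * Real.sqrt |q'' x|) :=
          div_nonneg hq3 hden.le
        rw [Real.norm_eq_abs, abs_of_nonneg hDnn]
        rw [div_le_iff₀ hden]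
        have h5 : (2 * m t)⁻¹ * (2 * |q'' x| * Real.sqrt |q'' x|)
            = |q'' x| * Real.sqrt |q'' x| / m t := by
          field_simp
        rw [h5, le_div_iff₀ hmpos]
        exact hkey
      -- mean value estimate
      have hmvt : ∀ y ∈ Icc (t - η t) (t + η t),
          |(Real.sqrt |q'' y|)⁻¹ - (Real.sqrt |q'' t|)⁻¹| ≤ (2 * m t)⁻¹ * η t := by
        intro y hy
        have h1 := (convex_Icc (t - η t) (t + η t)).norm_image_sub_le_of_norm_hasDerivWithin_le
          hD hDb hts hy
        rw [Real.norm_eq_abs, Real.norm_eq_abs] at h1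
        have h2 : |y - t| ≤ η t := abs_le.mpr ⟨by linarith [hy.1], by linarith [hy.2]⟩
        calc |(Real.sqrt |q'' y|)⁻¹ - (Real.sqrt |q'' t|)⁻¹| ≤ (2 * m t)⁻¹ * |y - t| := h1
          _ ≤ (2 * m t)⁻¹ * η t := by
              apply mul_le_mul_of_nonneg_left h2
              exact inv_nonneg.mpr (by linarith)
      -- pointwise bound on the ratio
      have hkey : ∀ y ∈ Icc (t - η t) (t + η t),
          |q'' y / q'' t - 1| ≤ 5 * (Real.sqrt (m t))⁻¹ := by
        intro y hy
        have hy0 : 0 < y := (hmem y hy).2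
        have hfy : 0 < |q'' y| := abs_pos.mpr (hneg y hy0).ne
        have hsy : 0 < Real.sqrt |q'' y| := Real.sqrt_pos.mpr hfy
        set st := Real.sqrt |q'' t| with hstdef
        set sy := Real.sqrt |q'' y| with hsydef
        set δ := η t * st / (2 * m t) with hδdef
        have hδ0 : 0 ≤ δ :=
          div_nonneg (mul_nonneg he0 hst.le) (by linarith)
        have h1 : |st / sy - 1| ≤ δ := by
          have h0 := hmvt y hy
          have e0 : st / sy - 1 = st * (sy⁻¹ - st⁻¹) := by
            rw [mul_sub, mul_inv_cancel₀ hst.ne', div_eq_mul_inv]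
          calc |st / sy - 1| = st * |sy⁻¹ - st⁻¹| := by
                rw [e0, abs_mul, abs_of_pos hst]
            _ ≤ st * ((2 * m t)⁻¹ * η t) := mul_le_mul_of_nonneg_left h0 hst.le
            _ = δ := by
                simp only [hδdef]
                rw [div_eq_mul_inv]
                ring
        have h2 : δ ≤ (2 * Real.sqrt (m t))⁻¹ := by
          have hms : Real.sqrt (m t) * Real.sqrt (m t) = m t := Real.mul_self_sqrt hmpos.le
          have hinv : (2 * Real.sqrt (m t))⁻¹ * (2 * m t) = Real.sqrt (m t) := by
            field_simp
            nlinarith [hms]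
          simp only [hδdef]
          rw [div_le_iff₀ (by linarith : (0:ℝ) < 2 * m t), hinv]
          exact le_trans hes hc_le
        have hδhalf : δ ≤ 1/2 := by
          refine le_trans h2 ?_
          rw [show (1:ℝ)/2 = (2:ℝ)⁻¹ by norm_num]
          apply inv_anti₀ two_pos
          linarith
        have hr := le_trans h1 hδhalf
        have hsy2 : sy ≤ 2 * st := by
          rw [abs_le] at hr
          have h3 : (1:ℝ)/2 ≤ st / sy := by linarith [hr.1]
          rw [le_div_iff₀ hsy] at h3
          linarith
        have h1' : |st - sy| ≤ δ * sy := by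
          have e1 : (st / sy - 1) * sy = st - sy := by
            rw [sub_mul, div_mul_cancel₀ _ hsy.ne', one_mul]
          calc |st - sy| = |(st / sy - 1) * sy| := by rw [e1]
            _ = |st / sy - 1| * |sy| := abs_mul _ _
            _ = |st / sy - 1| * sy := by rw [abs_of_pos hsy]
            _ ≤ δ * sy := mul_le_mul_of_nonneg_right h1 hsy.le
        have hq : q'' y / q'' t = sy ^ 2 / st ^ 2 := by
          simp only [hstdef, hsydef]
          rw [Real.sq_sqrt (abs_nonneg _), Real.sq_sqrt (abs_nonneg _),
            abs_of_neg (hneg y hy0), abs_of_neg htq, neg_div_neg_eq]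
        rw [hq]
        have hst2 : (0:ℝ) < st ^ 2 := pow_pos hst 2
        have habs2 := abs_le.mp h1'
        have hfin : |sy ^ 2 / st ^ 2 - 1| ≤ 6 * δ := by
          rw [div_sub_one hst2.ne', abs_div, abs_of_pos hst2, div_le_iff₀ hst2]
          have hup : |sy ^ 2 - st ^ 2| = |sy - st| * (sy + st) := by
            rw [← abs_of_pos (add_pos hsy hst), ← abs_mul]
            congr 1
            ring
          rw [hup]
          have h6 : |sy - st| ≤ δ * sy := by rwa [abs_sub_comm] at h1'
          calc |sy - st| * (sy + st) ≤ (δ * sy) * (sy + st) := by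
                apply mul_le_mul_of_nonneg_right h6
                exact (add_pos hsy hst).le
            _ ≤ (δ * (2 * st)) * (3 * st) := by
                have h7 : sy + st ≤ 3 * st := by linarith
                have h8 : δ * sy ≤ δ * (2 * st) := mul_le_mul_of_nonneg_left hsy2 hδ0
                exact mul_le_mul h8 h7 (by positivity) (by positivity)
            _ = 6 * δ * st ^ 2 := by ring
        calc |sy ^ 2 / st ^ 2 - 1| ≤ 6 * δ := hfin
          _ ≤ 6 * (2 * Real.sqrt (m t))⁻¹ := by linarith
          _ = 3 * (Real.sqrt (m t))⁻¹ := by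
              rw [mul_inv]
              ring
          _ ≤ 5 * (Real.sqrt (m t))⁻¹ := by
              have h9 : 0 ≤ (Real.sqrt (m t))⁻¹ := inv_nonneg.mpr (Real.sqrt_nonneg _)
              linarith
      -- conclude for the sup
      have hub : ∀ z ∈ (fun y => |q'' y / q'' t - 1|) '' Icc (t - η t) (t + η t),
          z ≤ 5 * (Real.sqrt (m t))⁻¹ := by
        rintro z ⟨y, hy, rfl⟩
        exact hkey y hy
      have hSle : sSup ((fun y => |q'' y / q'' t - 1|) '' Icc (t - η t) (t + η t))
          ≤ 5 * (Real.sqrt (m t))⁻¹ :=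
        Real.sSup_le hub (by
          have h9 : 0 ≤ (Real.sqrt (m t))⁻¹ := inv_nonneg.mpr (Real.sqrt_nonneg _)
          linarith)
      have hS0 : 0 ≤ sSup ((fun y => |q'' y / q'' t - 1|) '' Icc (t - η t) (t + η t)) := by
        have h0mem : (0:ℝ) ∈ (fun y => |q'' y / q'' t - 1|) '' Icc (t - η t) (t + η t) :=
          ⟨t, hts, by
            show |q'' t / q'' t - 1| = (0:ℝ)
            rw [div_self htq.ne, sub_self, abs_zero]⟩
        exact le_csSup ⟨5 * (Real.sqrt (m t))⁻¹, hub⟩ h0mem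
      rw [Real.norm_eq_abs, abs_of_nonneg hS0]
      exact hSle
    · have h1 : Tendsto (fun t => (Real.sqrt (m t))⁻¹) atTop (nhds 0) :=
        tendsto_inv_atTop_zero.comp (aux_sqrt_atTop.comp hm_top)
      have h2 := h1.const_mul (5:ℝ)
      simpa using h2
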